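/- Let H be a real Hilbert space of dimension at least 2 (possibly infinite) and let L > 0. Then the set {∫₀ᴸ u(s) ds : u : [0,L] → H continuous with ‖u(s)‖ = 1 for all s ∈ [0,L]} equals the closed ball {x ∈ H : ‖x‖ ≤ L}. That is: every such integral has norm at most L, and conversely for every x ∈ H with ‖x‖ ≤ L there exists a continuous curve u : [0,L] → H with values in the unit sphere of H and ∫₀ᴸ u(s) ds = x. -/
import Mathlib

open Real intervalIntegral

section aux
variable {H : Type*} [NormedAddCommGroup H] [InnerProductSpace ℝ H] [CompleteSpace H]

local notation "⟪" x ", " y "⟫" => @inner ℝ _ _ x y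

omit [CompleteSpace H] in
lemma aux_exists_orthogonal [CompleteSpace H] (hrank : 2 ≤ Module.rank ℝ H) (e : H) :
    ∃ f : H, ‖f‖ = 1 ∧ ⟪e, f⟫ = 0 := by
  set K : Submodule ℝ H := ℝ ∙ e with hKdef
  have hK : Kᗮ ≠ ⊥ := by
    intro h
    have hKtop : K = ⊤ := Submodule.orthogonal_eq_bot_iff.mp h
    have h1 : Module.rank ℝ H ≤ 1 := by
      rw [← rank_top ℝ H, ← hKtop]
      simpa using rank_span_le (R := ℝ) ({e} : Set H)
    have := hrank.trans h1
    norm_num at this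
  obtain ⟨f', hf'mem, hf'⟩ := Submodule.exists_mem_ne_zero_of_ne_bot hK
  refine ⟨‖f'‖⁻¹ • f', ?_, ?_⟩
  · rw [norm_smul]
    simp [norm_ne_zero_iff.mpr hf']
  · have h0 : ⟪e, f'⟫ = 0 :=
      (Submodule.mem_orthogonal K f').mp hf'mem e (Submodule.mem_span_singleton_self e)
    rw [inner_smul_right, h0, mul_zero]

omit [CompleteSpace H] in
lemma aux_norm_one {e f : H} (he : ‖e‖ = 1) (hf : ‖f‖ = 1) (hef : ⟪e, f⟫ = 0)
    (θ : ℝ) : ‖Real.cos θ • e + Real.sin θ • f‖ = 1 := by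
  have hfe : ⟪f, e⟫ = 0 := by rw [real_inner_comm]; exact hef
  have h2 : ‖Real.cos θ • e + Real.sin θ • f‖ ^ 2 = 1 := by
    rw [← real_inner_self_eq_norm_sq]
    simp only [inner_add_add_self, inner_smul_left, inner_smul_right, conj_trivial,
      hef, hfe, real_inner_self_eq_norm_sq, he, hf]
    ring_nf
    nlinarith [Real.sin_sq_add_cos_sq θ]
  nlinarith [norm_nonneg (Real.cos θ • e + Real.sin θ • f)]

omit [CompleteSpace H] in
lemma aux_cont (ℓ : ℝ) (e f : H) :
    Continuous (fun s : ℝ => Real.cos (2 * π * min s ℓ / ℓ) • e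
      + Real.sin (2 * π * min s ℓ / ℓ) • f) := by
  have h : Continuous (fun s : ℝ => 2 * π * min s ℓ / ℓ) :=
    (continuous_const.mul (continuous_id.min continuous_const)).div_const ℓ
  exact ((Real.continuous_cos.comp h).smul continuous_const).add
    ((Real.continuous_sin.comp h).smul continuous_const)

lemma aux_integral {ℓ L : ℝ} (hl0 : 0 ≤ ℓ) (hlL : ℓ ≤ L) (e f : H) :
    (∫ s in (0:ℝ)..L, (Real.cos (2 * π * min s ℓ / ℓ) • e
      + Real.sin (2 * π * min s ℓ / ℓ) • f)) = (L - ℓ) • e := by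
  rcases eq_or_lt_of_le hl0 with hl | hl
  · -- ℓ = 0 : constant curve
    have hθ : ∀ s : ℝ, 2 * π * min s ℓ / ℓ = 0 := by
      intro s; rw [← hl, div_zero]
    simp only [hθ, Real.cos_zero, Real.sin_zero, one_smul, zero_smul, add_zero]
    rw [intervalIntegral.integral_const, ← hl, sub_zero]
  · have hι1 : IntervalIntegrable _ MeasureTheory.volume 0 ℓ :=
      (aux_cont ℓ e f).intervalIntegrable _ _
    have hι2 : IntervalIntegrable _ MeasureTheory.volume ℓ L :=
      (aux_cont ℓ e f).intervalIntegrable _ _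
    rw [← intervalIntegral.integral_add_adjacent_intervals hι1 hι2]
    have h2 : (∫ s in ℓ..L, (Real.cos (2 * π * min s ℓ / ℓ) • e
        + Real.sin (2 * π * min s ℓ / ℓ) • f)) = (L - ℓ) • e := by
      have heq : Set.EqOn (fun s => Real.cos (2 * π * min s ℓ / ℓ) • e
          + Real.sin (2 * π * min s ℓ / ℓ) • f) (fun _ => e) (Set.uIcc ℓ L) := by
        intro s hs
        rw [Set.uIcc_of_le hlL] at hs
        have hθ : 2 * π * min s ℓ / ℓ = 2 * π := by
          rw [min_eq_right hs.1]
          field_simp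
        simp [hθ, Real.cos_two_pi, Real.sin_two_pi]
      rw [intervalIntegral.integral_congr heq, intervalIntegral.integral_const]
    have h1 : (∫ s in (0:ℝ)..ℓ, (Real.cos (2 * π * min s ℓ / ℓ) • e
        + Real.sin (2 * π * min s ℓ / ℓ) • f)) = 0 := by
      have hc : (2 * π / ℓ) ≠ 0 := div_ne_zero (by positivity) (ne_of_gt hl)
      have heq : Set.EqOn (fun s => Real.cos (2 * π * min s ℓ / ℓ) • e
          + Real.sin (2 * π * min s ℓ / ℓ) • f)
          (fun s => Real.cos (2 * π / ℓ * s) • e + Real.sin (2 * π / ℓ * s) • f)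
          (Set.uIcc 0 ℓ) := by
        intro s hs
        rw [Set.uIcc_of_le hl0] at hs
        have hθ : 2 * π * min s ℓ / ℓ = 2 * π / ℓ * s := by
          rw [min_eq_left hs.2]; ring
        simp only [hθ]
      rw [intervalIntegral.integral_congr heq]
      have hcos : IntervalIntegrable (fun s => Real.cos (2 * π / ℓ * s) • e)
          MeasureTheory.volume 0 ℓ :=
        ((Real.continuous_cos.comp (continuous_const.mul continuous_id)).smul
          continuous_const).intervalIntegrable _ _
      have hsin : IntervalIntegrable (fun s => Real.sin (2 * π / ℓ * s) • f)
          MeasureTheory.volume 0 ℓ :=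
        ((Real.continuous_sin.comp (continuous_const.mul continuous_id)).smul
          continuous_const).intervalIntegrable _ _
      rw [intervalIntegral.integral_add hcos hsin,
        intervalIntegral.integral_smul_const, intervalIntegral.integral_smul_const]
      have hcl : 2 * π / ℓ * ℓ = 2 * π := by field_simp
      have hc1 : (∫ s in (0:ℝ)..ℓ, Real.cos (2 * π / ℓ * s)) = 0 := by
        rw [intervalIntegral.integral_comp_mul_left Real.cos hc, mul_zero, hcl,
          integral_cos]
        simp [Real.sin_two_pi]
      have hc2 : (∫ s in (0:ℝ)..ℓ, Real.sin (2 * π / ℓ * s)) = 0 := by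
        rw [intervalIntegral.integral_comp_mul_left Real.sin hc, mul_zero, hcl,
          integral_sin]
        simp [Real.cos_two_pi]
      rw [hc1, hc2, zero_smul, zero_smul, add_zero]
    rw [h1, h2, zero_add]

end aux

/-- For a real Hilbert space `H` of dimension at least `2` and `L > 0`, the set of values
`∫₀ᴸ u(s) ds` over all continuous unit-sphere-valued curves `u : [0,L] → H` equals the
closed ball of radius `L` centered at the origin. -/
theorem endpoint_map_range_eq_closedBall
    {H : Type*} [NormedAddCommGroup H] [InnerProductSpace ℝ H] [CompleteSpace H]
    (hrank : 2 ≤ Module.rank ℝ H) (L : ℝ) (hL : 0 < L) :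
    {x : H | ∃ u : ℝ → H, ContinuousOn u (Set.Icc 0 L) ∧
        (∀ s ∈ Set.Icc (0 : ℝ) L, ‖u s‖ = 1) ∧ (∫ s in (0 : ℝ)..L, u s) = x} =
      Metric.closedBall (0 : H) L := by
  ext x
  simp only [Set.mem_setOf_eq, Metric.mem_closedBall, dist_zero_right]
  constructor
  · rintro ⟨u, hu, hnorm, hint⟩
    have : ‖∫ s in (0:ℝ)..L, u s‖ ≤ 1 * |L - 0| := by
      apply intervalIntegral.norm_integral_le_of_norm_le_const
      intro s hs
      rw [Set.uIoc_of_le hL.le] at hs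
      exact le_of_eq (hnorm s ⟨hs.1.le, hs.2⟩)
    rw [hint] at this
    rwa [sub_zero, abs_of_pos hL, one_mul] at this
  · intro hx
    have hnt : Nontrivial H :=
      rank_pos_iff_nontrivial.mp (lt_of_lt_of_le (by norm_num) hrank)
    obtain ⟨v, hv⟩ := exists_ne (0 : H)
    obtain ⟨e, he, hxe⟩ : ∃ e : H, ‖e‖ = 1 ∧ ‖x‖ • e = x := by
      by_cases h : x = 0
      · exact ⟨‖v‖⁻¹ • v, by rw [norm_smul]; simp [norm_ne_zero_iff.mpr hv],
          by simp [h]⟩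
      · exact ⟨‖x‖⁻¹ • x, by rw [norm_smul]; simp [norm_ne_zero_iff.mpr h],
          by rw [smul_smul, mul_inv_cancel₀ (norm_ne_zero_iff.mpr h), one_smul]⟩
    obtain ⟨f, hf, hef⟩ := aux_exists_orthogonal hrank e
    have hl0 : (0:ℝ) ≤ L - ‖x‖ := by linarith
    have hlL : L - ‖x‖ ≤ L := by have := norm_nonneg x; linarith
    refine ⟨fun s => Real.cos (2 * π * min s (L - ‖x‖) / (L - ‖x‖)) • e
      + Real.sin (2 * π * min s (L - ‖x‖) / (L - ‖x‖)) • f,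
      (aux_cont _ e f).continuousOn,
      fun s _ => aux_norm_one he hf hef _, ?_⟩
    rw [aux_integral hl0 hlL e f]
    rw [sub_sub_cancel, hxe]
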